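/- For every integer k ≥ 2, there exists a real number L such that a_k(n)/n converges to L as n → ∞, and L satisfies k/4 ≤ L ≤ k/3. -/

import Mathlib

open Finset Filter

/-- The four directions: horizontal, vertical and the two diagonals. -/
def Dirs : Finset (ℤ × ℤ) := {(1, 0), (0, 1), (1, 1), (1, -1)}

/-- `p` is the start of a pattern of length `k` of `S` in direction `d`:
`p + t • d ∈ S` for all `0 ≤ t < k`, while `p - d ∉ S` and `p + k • d ∉ S`. -/
def IsPatternStart (S : Finset (ℤ × ℤ)) (k : ℕ) (d p : ℤ × ℤ) : Prop :=
  (∀ t : ℕ, t < k → p + (t : ℤ) • d ∈ S) ∧ p - d ∉ S ∧ p + (k : ℤ) • d ∉ S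

/-- `P_k(S)`: the number of pairs `(d, p)` with `d ∈ Dirs` and `p` the start of a
pattern of length `k` of `S` in direction `d`. -/
noncomputable def patternCount (S : Finset (ℤ × ℤ)) (k : ℕ) : ℕ :=
  Set.ncard {dp : (ℤ × ℤ) × (ℤ × ℤ) | dp.1 ∈ Dirs ∧ IsPatternStart S k dp.1 dp.2}

/-- `a_k(n)`: the minimum cardinality of a finite `S ⊆ ℤ × ℤ` with exactly `n`
patterns of length `k`. -/
noncomputable def minPoints (k n : ℕ) : ℕ :=
  sInf {c | ∃ S : Finset (ℤ × ℤ), patternCount S k = n ∧ S.card = c}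

def patternSet (S : Finset (ℤ × ℤ)) (k : ℕ) : Set ((ℤ × ℤ) × (ℤ × ℤ)) :=
  {dp | dp.1 ∈ Dirs ∧ IsPatternStart S k dp.1 dp.2}

lemma patternCount_eq (S : Finset (ℤ × ℤ)) (k : ℕ) :
    patternCount S k = (patternSet S k).ncard := rfl

lemma mem_Dirs {d : ℤ × ℤ} :
    d ∈ Dirs ↔ d = (1,0) ∨ d = (0,1) ∨ d = (1,1) ∨ d = (1,-1) := by
  simp [Dirs]

lemma Dirs_fst {d : ℤ × ℤ} (hd : d ∈ Dirs) : 0 ≤ d.1 ∧ d.1 ≤ 1 := by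
  rcases mem_Dirs.1 hd with h | h | h | h <;> subst h <;> simp

lemma start_mem {S : Finset (ℤ × ℤ)} {k : ℕ} (hk : 1 ≤ k) {d p : ℤ × ℤ}
    (h : IsPatternStart S k d p) : p ∈ S := by
  have := h.1 0 hk
  simpa using this

lemma patternSet_subset (S : Finset (ℤ × ℤ)) {k : ℕ} (hk : 1 ≤ k) :
    patternSet S k ⊆ ↑(Dirs ×ˢ S) := by
  rintro ⟨d, p⟩ ⟨hd, hp⟩
  simp only [Finset.coe_product, Set.mem_prod, Finset.mem_coe]
  exact ⟨hd, start_mem hk hp⟩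

lemma patternSet_finite (S : Finset (ℤ × ℤ)) {k : ℕ} (hk : 1 ≤ k) :
    (patternSet S k).Finite :=
  Set.Finite.subset (Finset.finite_toSet _) (patternSet_subset S hk)

lemma patternCount_eq_card {S : Finset (ℤ × ℤ)} {k : ℕ} {F : Finset ((ℤ × ℤ) × (ℤ × ℤ))}
    (h : patternSet S k = ↑F) : patternCount S k = F.card := by
  rw [patternCount_eq, h, Set.ncard_coe_finset]

lemma isPatternStart_translate (S : Finset (ℤ × ℤ)) (k : ℕ) (d p v : ℤ × ℤ) :
    IsPatternStart (S.image (· + v)) k d (p + v) ↔ IsPatternStart S k d p := by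
  have key : ∀ q : ℤ × ℤ, q + v ∈ S.image (· + v) ↔ q ∈ S := by
    intro q
    simp only [Finset.mem_image]
    constructor
    · rintro ⟨a, ha, h⟩
      have : a = q := by
        have := add_right_cancel h
        exact this
      rwa [this] at ha
    · intro h; exact ⟨q, h, rfl⟩
  constructor
  · rintro ⟨h1, h2, h3⟩
    refine ⟨fun t ht => ?_, fun h => h2 ?_, fun h => h3 ?_⟩
    · have := h1 t ht
      rw [show p + v + (t : ℤ) • d = (p + (t : ℤ) • d) + v by ring] at this
      exact (key _).1 this
    · rw [show p + v - d = (p - d) + v by ring]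
      exact (key _).2 h
    · rw [show p + v + (k : ℤ) • d = (p + (k : ℤ) • d) + v by ring]
      exact (key _).2 h
  · rintro ⟨h1, h2, h3⟩
    refine ⟨fun t ht => ?_, fun h => ?_, fun h => ?_⟩
    · rw [show p + v + (t : ℤ) • d = (p + (t : ℤ) • d) + v by ring]
      exact (key _).2 (h1 t ht)
    · rw [show p + v - d = (p - d) + v by ring] at h
      exact h2 ((key _).1 h)
    · rw [show p + v + (k : ℤ) • d = (p + (k : ℤ) • d) + v by ring] at h
      exact h3 ((key _).1 h)

lemma patternCount_translate (S : Finset (ℤ × ℤ)) (k : ℕ) (v : ℤ × ℤ) :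
    patternCount (S.image (· + v)) k = patternCount S k := by
  rw [patternCount_eq, patternCount_eq]
  have : patternSet (S.image (· + v)) k =
      (fun dp : (ℤ × ℤ) × (ℤ × ℤ) => (dp.1, dp.2 + v)) '' patternSet S k := by
    ext dp
    obtain ⟨d, p⟩ := dp
    constructor
    · rintro ⟨hd, hp⟩
      refine ⟨(d, p - v), ⟨hd, ?_⟩, by simp⟩
      have hpv : p - v + v = p := by ring
      have := (isPatternStart_translate S k d (p - v) v).1 (by rwa [hpv])
      exact this
    · rintro ⟨⟨d', p'⟩, ⟨hd, hp⟩, h⟩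
      simp only [Prod.mk.injEq] at h
      obtain ⟨h1, h2⟩ := h
      subst h1; subst h2
      exact ⟨hd, (isPatternStart_translate S k d' p' v).2 hp⟩
  rw [this, Set.ncard_image_of_injective]
  rintro ⟨d, p⟩ ⟨d', p'⟩ h
  simp only [Prod.mk.injEq] at h
  exact Prod.ext_iff.2 ⟨h.1, add_right_cancel h.2⟩

lemma fst_add_smul (p d : ℤ × ℤ) (t : ℤ) : (p + t • d).1 = p.1 + t * d.1 := by
  simp [Prod.fst_add, smul_eq_mul]

lemma isPatternStart_union_iff {k : ℕ} (hk : 1 ≤ k) {S T : Finset (ℤ × ℤ)}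
    (hsep : ∀ p ∈ S, ∀ q ∈ T, p.1 + (k : ℤ) + 1 < q.1) {d : ℤ × ℤ} (hd : d ∈ Dirs)
    (p : ℤ × ℤ) :
    IsPatternStart (S ∪ T) k d p ↔ IsPatternStart S k d p ∨ IsPatternStart T k d p := by
  obtain ⟨hd0, hd1⟩ := Dirs_fst hd
  have hk' : (1 : ℤ) ≤ (k : ℤ) := by exact_mod_cast hk
  constructor
  · intro h
    have hp := start_mem hk h
    rcases Finset.mem_union.1 hp with hpS | hpT
    · left
      refine ⟨fun t ht => ?_, fun hs => h.2.1 (Finset.mem_union_left _ hs),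
        fun hs => h.2.2 (Finset.mem_union_left _ hs)⟩
      rcases Finset.mem_union.1 (h.1 t ht) with h' | h'
      · exact h'
      · exfalso
        have h1 := hsep p hpS _ h'
        rw [fst_add_smul] at h1
        have h2 : (t : ℤ) * d.1 ≤ t := mul_le_of_le_one_right (by positivity) hd1
        have h3 : (t : ℤ) < k := by exact_mod_cast ht
        linarith
    · right
      refine ⟨fun t ht => ?_, fun hs => h.2.1 (Finset.mem_union_right _ hs),
        fun hs => h.2.2 (Finset.mem_union_right _ hs)⟩
      rcases Finset.mem_union.1 (h.1 t ht) with h' | h'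
      · exfalso
        have h1 := hsep _ h' p hpT
        rw [fst_add_smul] at h1
        have h2 : (0 : ℤ) ≤ (t : ℤ) * d.1 := mul_nonneg (by positivity) hd0
        linarith
      · exact h'
  · rintro (⟨h1, h2, h3⟩ | ⟨h1, h2, h3⟩)
    · have hpS : p ∈ S := by simpa using h1 0 hk
      refine ⟨fun t ht => Finset.mem_union_left _ (h1 t ht), fun hs => ?_, fun hs => ?_⟩
      · rcases Finset.mem_union.1 hs with h' | h'
        · exact h2 h'
        · have := hsep p hpS _ h'
          have hx : (p - d).1 = p.1 - d.1 := rfl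
          rw [hx] at this
          linarith
      · rcases Finset.mem_union.1 hs with h' | h'
        · exact h3 h'
        · have := hsep p hpS _ h'
          rw [fst_add_smul] at this
          have h2' : (k : ℤ) * d.1 ≤ k := mul_le_of_le_one_right (by positivity) hd1
          linarith
    · have hpT : p ∈ T := by simpa using h1 0 hk
      refine ⟨fun t ht => Finset.mem_union_right _ (h1 t ht), fun hs => ?_, fun hs => ?_⟩
      · rcases Finset.mem_union.1 hs with h' | h'
        · have := hsep _ h' p hpT
          have hx : (p - d).1 = p.1 - d.1 := rfl
          rw [hx] at this
          linarith
        · exact h2 h'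
      · rcases Finset.mem_union.1 hs with h' | h'
        · have := hsep _ h' p hpT
          rw [fst_add_smul] at this
          have h2' : (0 : ℤ) ≤ (k : ℤ) * d.1 := mul_nonneg (by positivity) hd0
          linarith
        · exact h3 h'

lemma patternCount_union {k : ℕ} (hk : 1 ≤ k) {S T : Finset (ℤ × ℤ)}
    (hsep : ∀ p ∈ S, ∀ q ∈ T, p.1 + (k : ℤ) + 1 < q.1) :
    patternCount (S ∪ T) k = patternCount S k + patternCount T k := by
  rw [patternCount_eq, patternCount_eq, patternCount_eq]
  have hset : patternSet (S ∪ T) k = patternSet S k ∪ patternSet T k := by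
    ext ⟨d, p⟩
    simp only [patternSet, Set.mem_setOf_eq, Set.mem_union]
    constructor
    · rintro ⟨hd, hp⟩
      rcases (isPatternStart_union_iff hk hsep hd p).1 hp with h | h
      · exact Or.inl ⟨hd, h⟩
      · exact Or.inr ⟨hd, h⟩
    · rintro (⟨hd, hp⟩ | ⟨hd, hp⟩)
      · exact ⟨hd, (isPatternStart_union_iff hk hsep hd p).2 (Or.inl hp)⟩
      · exact ⟨hd, (isPatternStart_union_iff hk hsep hd p).2 (Or.inr hp)⟩
  rw [hset]
  refine Set.ncard_union_eq ?_ (patternSet_finite S hk) (patternSet_finite T hk)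
  rw [Set.disjoint_left]
  rintro ⟨d, p⟩ ⟨_, hpS⟩ ⟨_, hpT⟩
  have := hsep p (start_mem hk hpS) p (start_mem hk hpT)
  linarith

lemma disjoint_of_sep {k : ℕ} {S T : Finset (ℤ × ℤ)}
    (hsep : ∀ p ∈ S, ∀ q ∈ T, p.1 + (k : ℤ) + 1 < q.1) : Disjoint S T := by
  rw [Finset.disjoint_left]
  intro p hpS hpT
  have := hsep p hpS p hpT
  have hk0 : (0 : ℤ) ≤ (k : ℤ) := by positivity
  linarith

lemma start_inj_aux {S : Finset (ℤ × ℤ)} {k : ℕ} {d p p' : ℤ × ℤ} {t t' : ℕ}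
    (ht' : t' < k) (htt : t < t')
    (h : IsPatternStart S k d p) (h' : IsPatternStart S k d p')
    (he : p + (t : ℤ) • d = p' + (t' : ℤ) • d) : False := by
  apply h'.2.2
  have hmem := h.1 (k - (t' - t)) (by omega)
  have hcast : ((k - (t' - t) : ℕ) : ℤ) = (k : ℤ) - ((t' : ℤ) - (t : ℤ)) := by omega
  rw [hcast] at hmem
  obtain ⟨he1, he2⟩ := Prod.ext_iff.1 he
  simp only [Prod.fst_add, Prod.snd_add, Prod.smul_fst, Prod.smul_snd, smul_eq_mul] at he1 he2
  have heq : p + ((k : ℤ) - ((t' : ℤ) - (t : ℤ))) • d = p' + (k : ℤ) • d := by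
    refine Prod.ext_iff.2 ⟨?_, ?_⟩ <;>
      simp only [Prod.fst_add, Prod.snd_add, Prod.smul_fst, Prod.smul_snd, smul_eq_mul]
    · linear_combination he1
    · linear_combination he2
  rwa [heq] at hmem

lemma start_unique {S : Finset (ℤ × ℤ)} {k : ℕ} {d p p' : ℤ × ℤ} {t t' : ℕ}
    (ht : t < k) (ht' : t' < k)
    (h : IsPatternStart S k d p) (h' : IsPatternStart S k d p')
    (he : p + (t : ℤ) • d = p' + (t' : ℤ) • d) : p = p' ∧ t = t' := by
  rcases Nat.lt_trichotomy t t' with hlt | heq | hgt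
  · exact absurd (start_inj_aux ht' hlt h h' he) (by simp)
  · subst heq
    exact ⟨add_right_cancel he, rfl⟩
  · exact absurd (start_inj_aux ht hgt h' h he.symm) (by simp)

lemma Dirs_card : Dirs.card = 4 := by decide

lemma count_le {k : ℕ} (hk : 1 ≤ k) (S : Finset (ℤ × ℤ)) :
    k * patternCount S k ≤ 4 * S.card := by
  classical
  have hfin := patternSet_finite S hk
  have hcount : patternCount S k = hfin.toFinset.card := by
    rw [patternCount_eq, Set.ncard_eq_toFinset_card _ hfin]
  set F := hfin.toFinset with hF
  have key : (F ×ˢ Finset.range k).card ≤ (Dirs ×ˢ S).card := by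
    apply Finset.card_le_card_of_injOn
      (fun x => (x.1.1, x.1.2 + (x.2 : ℤ) • x.1.1))
    · rintro ⟨⟨d, p⟩, t⟩ hx
      rw [Finset.mem_coe, Finset.mem_product] at hx
      obtain ⟨hdp, ht⟩ := hx
      rw [hF, Set.Finite.mem_toFinset] at hdp
      obtain ⟨hd, hst⟩ := hdp
      rw [Finset.mem_range] at ht
      rw [Finset.mem_coe, Finset.mem_product]
      exact ⟨hd, hst.1 t ht⟩
    · rintro ⟨⟨d, p⟩, t⟩ hx ⟨⟨d', p'⟩, t'⟩ hy hxy
      simp only [Finset.coe_product, Set.mem_prod, Finset.mem_coe, Finset.mem_range,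
        hF, Set.Finite.mem_toFinset] at hx hy
      obtain ⟨⟨hd, hst⟩, ht⟩ := hx
      obtain ⟨⟨hd', hst'⟩, ht'⟩ := hy
      simp only [Prod.mk.injEq] at hxy
      obtain ⟨hdd, hpp⟩ := hxy
      subst hdd
      obtain ⟨hp, htt⟩ := start_unique ht ht' hst hst' hpp
      simp only [Prod.mk.injEq]
      exact ⟨⟨trivial, hp⟩, htt⟩
  rw [Finset.card_product, Finset.card_range] at key
  rw [Finset.card_product, Dirs_card] at key
  rw [hcount]
  calc k * F.card = F.card * k := mul_comm _ _
    _ ≤ 4 * S.card := key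

noncomputable def grid (k m : ℕ) : Finset (ℤ × ℤ) :=
  Finset.Ico (0 : ℤ) (k : ℤ) ×ˢ Finset.Ico (0 : ℤ) (m : ℤ)

lemma mem_grid {k m : ℕ} {p : ℤ × ℤ} :
    p ∈ grid k m ↔ (0 ≤ p.1 ∧ p.1 < k) ∧ (0 ≤ p.2 ∧ p.2 < m) := by
  simp [grid, Finset.mem_product, Finset.mem_Ico]

lemma card_grid (k m : ℕ) : (grid k m).card = k * m := by
  simp [grid, Finset.card_product]

lemma startGrid_horiz {k m : ℕ} (hk : 1 ≤ k) (p : ℤ × ℤ) :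
    IsPatternStart (grid k m) k ((1 : ℤ), (0 : ℤ)) p ↔
      p.1 = 0 ∧ 0 ≤ p.2 ∧ p.2 < m := by
  simp only [IsPatternStart, mem_grid, Prod.smul_mk, smul_eq_mul, mul_one, mul_zero,
    Prod.fst_add, Prod.snd_add, Prod.fst_sub, Prod.snd_sub, add_zero, sub_zero,
    Prod.mk.injEq]
  constructor
  · rintro ⟨h1, h2, h3⟩
    have a := h1 0 (by omega)
    have b := h1 (k - 1) (by omega)
    have hcast : ((k - 1 : ℕ) : ℤ) = (k : ℤ) - 1 := by omega
    rw [hcast] at b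
    push_cast at a b
    omega
  · rintro ⟨e0, e1, e2⟩
    refine ⟨fun t ht => ?_, by omega, by omega⟩
    have ht' : (t : ℤ) < k := by exact_mod_cast ht
    have ht0 : (0 : ℤ) ≤ (t : ℤ) := by positivity
    omega

lemma startGrid_vert {k m : ℕ} (hk : 2 ≤ k) (hm : k + 1 ≤ m) (p : ℤ × ℤ) :
    ¬ IsPatternStart (grid k m) k ((0 : ℤ), (1 : ℤ)) p := by
  simp only [IsPatternStart, mem_grid, Prod.smul_mk, smul_eq_mul, mul_one, mul_zero,
    Prod.fst_add, Prod.snd_add, Prod.fst_sub, Prod.snd_sub, add_zero, sub_zero]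
  rintro ⟨h1, h2, h3⟩
  have a := h1 0 (by omega)
  have b := h1 (k - 1) (by omega)
  have hcast : ((k - 1 : ℕ) : ℤ) = (k : ℤ) - 1 := by omega
  rw [hcast] at b
  push_cast at a b
  have hm' : (k : ℤ) + 1 ≤ (m : ℤ) := by exact_mod_cast hm
  omega

lemma startGrid_diag {k m : ℕ} (hk : 1 ≤ k) (p : ℤ × ℤ) :
    IsPatternStart (grid k m) k ((1 : ℤ), (1 : ℤ)) p ↔
      p.1 = 0 ∧ 0 ≤ p.2 ∧ p.2 ≤ (m : ℤ) - k := by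
  simp only [IsPatternStart, mem_grid, Prod.smul_mk, smul_eq_mul, mul_one,
    Prod.fst_add, Prod.snd_add, Prod.fst_sub, Prod.snd_sub]
  constructor
  · rintro ⟨h1, h2, h3⟩
    have a := h1 0 (by omega)
    have b := h1 (k - 1) (by omega)
    have hcast : ((k - 1 : ℕ) : ℤ) = (k : ℤ) - 1 := by omega
    rw [hcast] at b
    push_cast at a b
    omega
  · rintro ⟨e0, e1, e2⟩
    refine ⟨fun t ht => ?_, by omega, by omega⟩
    have ht' : (t : ℤ) < k := by exact_mod_cast ht
    have ht0 : (0 : ℤ) ≤ (t : ℤ) := by positivity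
    omega

lemma startGrid_anti {k m : ℕ} (hk : 1 ≤ k) (p : ℤ × ℤ) :
    IsPatternStart (grid k m) k ((1 : ℤ), (-1 : ℤ)) p ↔
      p.1 = 0 ∧ (k : ℤ) - 1 ≤ p.2 ∧ p.2 < m := by
  simp only [IsPatternStart, mem_grid, Prod.smul_mk, smul_eq_mul, mul_one, mul_neg,
    Prod.fst_add, Prod.snd_add, Prod.fst_sub, Prod.snd_sub]
  constructor
  · rintro ⟨h1, h2, h3⟩
    have a := h1 0 (by omega)
    have b := h1 (k - 1) (by omega)
    have hcast : ((k - 1 : ℕ) : ℤ) = (k : ℤ) - 1 := by omega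
    rw [hcast] at b
    push_cast at a b
    omega
  · rintro ⟨e0, e1, e2⟩
    refine ⟨fun t ht => ?_, by omega, by omega⟩
    have ht' : (t : ℤ) < k := by exact_mod_cast ht
    have ht0 : (0 : ℤ) ≤ (t : ℤ) := by positivity
    omega

noncomputable def gridStarts (k m : ℕ) : Finset ((ℤ × ℤ) × (ℤ × ℤ)) :=
  ((Finset.Ico (0 : ℤ) (m : ℤ)).image fun y => (((1 : ℤ), (0 : ℤ)), ((0 : ℤ), y))) ∪
  ((Finset.Ico (0 : ℤ) ((m : ℤ) - k + 1)).image fun y => (((1 : ℤ), (1 : ℤ)), ((0 : ℤ), y))) ∪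
  ((Finset.Ico ((k : ℤ) - 1) (m : ℤ)).image fun y => (((1 : ℤ), (-1 : ℤ)), ((0 : ℤ), y)))

lemma patternSet_grid_eq {k m : ℕ} (hk : 2 ≤ k) (hm : k + 1 ≤ m) :
    patternSet (grid k m) k = ↑(gridStarts k m) := by
  have hk1 : 1 ≤ k := by omega
  ext ⟨d, p⟩
  rw [Finset.mem_coe]
  show (d ∈ Dirs ∧ IsPatternStart (grid k m) k d p) ↔ _
  constructor
  · rintro ⟨hd, hst⟩
    rcases mem_Dirs.1 hd with h | h | h | h <;> subst h
    · obtain ⟨e0, e1, e2⟩ := (startGrid_horiz hk1 p).1 hst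
      apply Finset.mem_union_left
      apply Finset.mem_union_left
      exact Finset.mem_image.2 ⟨p.2, Finset.mem_Ico.2 ⟨e1, e2⟩,
        by rw [Prod.mk.injEq]; exact ⟨rfl, (Prod.ext_iff.2 ⟨e0.symm, rfl⟩)⟩⟩
    · exact absurd hst (startGrid_vert hk hm p)
    · obtain ⟨e0, e1, e2⟩ := (startGrid_diag hk1 p).1 hst
      apply Finset.mem_union_left
      apply Finset.mem_union_right
      exact Finset.mem_image.2 ⟨p.2, Finset.mem_Ico.2 ⟨e1, by omega⟩,
        by rw [Prod.mk.injEq]; exact ⟨rfl, (Prod.ext_iff.2 ⟨e0.symm, rfl⟩)⟩⟩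
    · obtain ⟨e0, e1, e2⟩ := (startGrid_anti hk1 p).1 hst
      apply Finset.mem_union_right
      exact Finset.mem_image.2 ⟨p.2, Finset.mem_Ico.2 ⟨e1, e2⟩,
        by rw [Prod.mk.injEq]; exact ⟨rfl, (Prod.ext_iff.2 ⟨e0.symm, rfl⟩)⟩⟩
  · intro h
    rcases Finset.mem_union.1 h with h' | h'
    · rcases Finset.mem_union.1 h' with h'' | h''
      · obtain ⟨y, hy, heq⟩ := Finset.mem_image.1 h''
        rw [Finset.mem_Ico] at hy
        obtain ⟨rfl, rfl⟩ := Prod.mk.injEq .. ▸ heq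
        exact ⟨mem_Dirs.2 (Or.inl rfl), (startGrid_horiz hk1 _).2 ⟨rfl, hy.1, hy.2⟩⟩
      · obtain ⟨y, hy, heq⟩ := Finset.mem_image.1 h''
        rw [Finset.mem_Ico] at hy
        obtain ⟨rfl, rfl⟩ := Prod.mk.injEq .. ▸ heq
        exact ⟨mem_Dirs.2 (Or.inr (Or.inr (Or.inl rfl))),
          (startGrid_diag hk1 _).2 ⟨rfl, hy.1, by omega⟩⟩
    · obtain ⟨y, hy, heq⟩ := Finset.mem_image.1 h'
      rw [Finset.mem_Ico] at hy
      obtain ⟨rfl, rfl⟩ := Prod.mk.injEq .. ▸ heq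
      exact ⟨mem_Dirs.2 (Or.inr (Or.inr (Or.inr rfl))),
        (startGrid_anti hk1 _).2 ⟨rfl, hy.1, hy.2⟩⟩

lemma patternCount_grid {k m : ℕ} (hk : 2 ≤ k) (hm : k + 1 ≤ m) :
    patternCount (grid k m) k = 3 * m + 2 - 2 * k := by
  rw [patternCount_eq_card (patternSet_grid_eq hk hm)]
  have hinj : ∀ c : ℤ × ℤ, Function.Injective (fun y : ℤ => (c, ((0 : ℤ), y))) := by
    intro c a b hab
    simpa using hab
  have hd1 : Disjoint
      ((Finset.Ico (0 : ℤ) (m : ℤ)).image fun y => (((1 : ℤ), (0 : ℤ)), ((0 : ℤ), y)))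
      ((Finset.Ico (0 : ℤ) ((m : ℤ) - k + 1)).image fun y => (((1 : ℤ), (1 : ℤ)), ((0 : ℤ), y))) := by
    rw [Finset.disjoint_left]
    rintro x hx hy
    obtain ⟨a, _, rfl⟩ := Finset.mem_image.1 hx
    obtain ⟨b, _, hb⟩ := Finset.mem_image.1 hy
    exact absurd hb (by simp [Prod.ext_iff])
  have hd2 : Disjoint
      (((Finset.Ico (0 : ℤ) (m : ℤ)).image fun y => (((1 : ℤ), (0 : ℤ)), ((0 : ℤ), y))) ∪
        ((Finset.Ico (0 : ℤ) ((m : ℤ) - k + 1)).image fun y => (((1 : ℤ), (1 : ℤ)), ((0 : ℤ), y))))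
      ((Finset.Ico ((k : ℤ) - 1) (m : ℤ)).image fun y => (((1 : ℤ), (-1 : ℤ)), ((0 : ℤ), y))) := by
    rw [Finset.disjoint_left]
    rintro x hx hy
    obtain ⟨b, _, hb⟩ := Finset.mem_image.1 hy
    rcases Finset.mem_union.1 hx with h' | h'
    · obtain ⟨a, _, rfl⟩ := Finset.mem_image.1 h'
      exact absurd hb (by simp [Prod.ext_iff])
    · obtain ⟨a, _, rfl⟩ := Finset.mem_image.1 h'
      exact absurd hb (by simp [Prod.ext_iff])
  rw [gridStarts, Finset.card_union_of_disjoint hd2, Finset.card_union_of_disjoint hd1,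
    Finset.card_image_of_injective _ (hinj _), Finset.card_image_of_injective _ (hinj _),
    Finset.card_image_of_injective _ (hinj _)]
  rw [Int.card_Ico, Int.card_Ico, Int.card_Ico]
  omega

lemma patternCount_empty {k : ℕ} (hk : 1 ≤ k) :
    patternCount (∅ : Finset (ℤ × ℤ)) k = 0 := by
  have h : patternSet (∅ : Finset (ℤ × ℤ)) k = ∅ := by
    ext ⟨d, p⟩
    simp only [patternSet, Set.mem_setOf_eq, Set.mem_empty_iff_false, iff_false]
    rintro ⟨hd, hst⟩
    exact absurd (start_mem hk hst) (Finset.notMem_empty p)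
  rw [patternCount_eq, h, Set.ncard_empty]

lemma startGrid1_vert {k : ℕ} (hk : 2 ≤ k) (p : ℤ × ℤ) :
    ¬ IsPatternStart (grid k 1) k ((0 : ℤ), (1 : ℤ)) p := by
  simp only [IsPatternStart, mem_grid, Prod.smul_mk, smul_eq_mul, mul_one, mul_zero,
    Prod.fst_add, Prod.snd_add, add_zero]
  rintro ⟨h1, -, -⟩
  have a := h1 0 (by omega)
  have b := h1 1 (by omega)
  push_cast at a b
  omega

lemma patternCount_row {k : ℕ} (hk : 2 ≤ k) : patternCount (grid k 1) k = 1 := by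
  have hset : patternSet (grid k 1) k =
      ↑({(((1 : ℤ), (0 : ℤ)), ((0 : ℤ), (0 : ℤ)))} : Finset ((ℤ × ℤ) × (ℤ × ℤ))) := by
    ext ⟨d, p⟩
    rw [Finset.mem_coe, Finset.mem_singleton]
    show (d ∈ Dirs ∧ IsPatternStart (grid k 1) k d p) ↔ _
    constructor
    · rintro ⟨hd, hst⟩
      rcases mem_Dirs.1 hd with h | h | h | h <;> subst h
      · obtain ⟨e0, e1, e2⟩ := (startGrid_horiz (by omega) p).1 hst
        have e2' : p.2 = 0 := by omega
        rw [Prod.mk.injEq]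
        exact ⟨rfl, Prod.ext_iff.2 ⟨e0, e2'⟩⟩
      · exact absurd hst (startGrid1_vert hk p)
      · obtain ⟨e0, e1, e2⟩ := (startGrid_diag (by omega) p).1 hst
        exact absurd e2 (by push_cast; omega)
      · obtain ⟨e0, e1, e2⟩ := (startGrid_anti (by omega) p).1 hst
        exact absurd e2 (by push_cast; omega)
    · intro h
      rw [Prod.mk.injEq] at h
      obtain ⟨h1, h2⟩ := h
      subst h1; subst h2
      refine ⟨mem_Dirs.2 (Or.inl rfl), (startGrid_horiz (by omega) _).2 ⟨rfl, le_refl _, ?_⟩⟩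
      norm_num
  rw [patternCount_eq_card hset, Finset.card_singleton]

lemma exists_sep_translate (k : ℕ) (S T0 : Finset (ℤ × ℤ)) :
    ∃ T : Finset (ℤ × ℤ), T.card = T0.card ∧ patternCount T k = patternCount T0 k ∧
      ∀ p ∈ S, ∀ q ∈ T, p.1 + (k : ℤ) + 1 < q.1 := by
  obtain ⟨X, hX⟩ := (S.finite_toSet.image Prod.fst).bddAbove
  obtain ⟨Y, hY⟩ := (T0.finite_toSet.image Prod.fst).bddBelow
  refine ⟨T0.image (· + (X - Y + k + 2, 0)), ?_, patternCount_translate _ _ _, ?_⟩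
  · exact Finset.card_image_of_injective _ (add_left_injective _)
  · intro p hp q hq
    obtain ⟨g, hg, rfl⟩ := Finset.mem_image.1 hq
    have h1 : p.1 ≤ X := hX ⟨p, hp, rfl⟩
    have h2 : Y ≤ g.1 := hY ⟨g, hg, rfl⟩
    have : (g + ((X : ℤ) - Y + k + 2, (0 : ℤ))).1 = g.1 + (X - Y + (k : ℤ) + 2) := rfl
    rw [this]
    linarith

lemma exists_count {k : ℕ} (hk : 2 ≤ k) (n : ℕ) :
    ∃ S : Finset (ℤ × ℤ), patternCount S k = n := by
  induction n with
  | zero => exact ⟨∅, patternCount_empty (by omega)⟩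
  | succ n ih =>
    obtain ⟨S, hS⟩ := ih
    obtain ⟨T, -, hTc, hsep⟩ := exists_sep_translate k S (grid k 1)
    refine ⟨S ∪ T, ?_⟩
    rw [patternCount_union (by omega) hsep, hS, hTc, patternCount_row hk]

lemma minPoints_spec {k : ℕ} (hk : 2 ≤ k) (n : ℕ) :
    ∃ S : Finset (ℤ × ℤ), patternCount S k = n ∧ S.card = minPoints k n := by
  obtain ⟨S, hS⟩ := exists_count hk n
  have hne : {c | ∃ S : Finset (ℤ × ℤ), patternCount S k = n ∧ S.card = c}.Nonempty :=
    ⟨S.card, S, hS, rfl⟩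
  obtain ⟨S', hS', hc⟩ := Nat.sInf_mem hne
  exact ⟨S', hS', hc⟩

lemma minPoints_le {k n : ℕ} {S : Finset (ℤ × ℤ)} (hS : patternCount S k = n) :
    minPoints k n ≤ S.card :=
  Nat.sInf_le ⟨S, hS, rfl⟩

lemma minPoints_subadd {k : ℕ} (hk : 2 ≤ k) (a b : ℕ) :
    minPoints k (a + b) ≤ minPoints k a + minPoints k b := by
  obtain ⟨S, hS, hSc⟩ := minPoints_spec hk a
  obtain ⟨T0, hT0, hT0c⟩ := minPoints_spec hk b
  obtain ⟨T, hTcard, hTc, hsep⟩ := exists_sep_translate k S T0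
  have hcount : patternCount (S ∪ T) k = a + b := by
    rw [patternCount_union (by omega) hsep, hS, hTc, hT0]
  calc minPoints k (a + b) ≤ (S ∪ T).card := minPoints_le hcount
    _ ≤ S.card + T.card := Finset.card_union_le _ _
    _ = minPoints k a + minPoints k b := by rw [hSc, hTcard, hT0c]

lemma minPoints_lower {k : ℕ} (hk : 2 ≤ k) (n : ℕ) :
    k * n ≤ 4 * minPoints k n := by
  obtain ⟨S, hS, hc⟩ := minPoints_spec hk n
  have := count_le (k := k) (by omega) S
  rw [hS] at this
  rw [← hc]
  exact this

lemma minPoints_upper {k : ℕ} (hk : 2 ≤ k) {m : ℕ} (hm : k + 1 ≤ m) :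
    minPoints k (3 * m + 2 - 2 * k) ≤ k * m := by
  have h := minPoints_le (patternCount_grid hk hm)
  rwa [card_grid] at h

theorem stmt6 (k : ℕ) (hk : 2 ≤ k) :
    ∃ L : ℝ, Tendsto (fun n : ℕ => (minPoints k n : ℝ) / n) atTop (nhds L) ∧
      (k : ℝ) / 4 ≤ L ∧ L ≤ (k : ℝ) / 3 := by
  set u : ℕ → ℝ := fun n => (minPoints k n : ℝ) with hu
  have hsub : Subadditive u := by
    intro a b
    have := minPoints_subadd hk a b
    simp only [hu]
    exact_mod_cast this
  have hbdd : BddBelow (Set.range fun n : ℕ => u n / n) := by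
    refine ⟨0, ?_⟩
    rintro x ⟨n, rfl⟩
    positivity
  refine ⟨hsub.lim, hsub.tendsto_lim hbdd, ?_, ?_⟩
  · rw [Subadditive.lim]
    apply le_csInf
    · exact ⟨u 1 / (1:ℕ), 1, Set.mem_Ici.2 le_rfl, rfl⟩
    · rintro b ⟨n, hn, rfl⟩
      have hn1 : 1 ≤ n := hn
      have hlow := minPoints_lower hk n
      have hnpos : (0 : ℝ) < (n : ℝ) := by exact_mod_cast hn1
      rw [div_le_div_iff₀ (by norm_num) hnpos]
      have h4 : (k : ℝ) * n ≤ 4 * u n := by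
        simp only [hu]
        exact_mod_cast hlow
      linarith
  · have A : Tendsto (fun x : ℝ => ((k : ℝ) + (k * (k + 1)) / x) / (3 + (k + 5) / x))
        atTop (nhds (((k : ℝ) + 0) / (3 + 0))) :=
      (tendsto_const_nhds.add (tendsto_const_nhds.div_atTop tendsto_id)).div
        (tendsto_const_nhds.add (tendsto_const_nhds.div_atTop tendsto_id)) (by norm_num)
    have A' : Tendsto (fun x : ℝ => ((k : ℝ) + (k * (k + 1)) / x) / (3 + (k + 5) / x))
        atTop (nhds ((k : ℝ) / 3)) := by
      simpa using A
    have B : Tendsto (fun x : ℝ => (k : ℝ) * (k + 1 + x) / (k + 5 + 3 * x))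
        atTop (nhds ((k : ℝ) / 3)) := by
      refine A'.congr' (((eventually_gt_atTop (0 : ℝ)).mono fun x hx => ?_))
      have hx' : x ≠ 0 := ne_of_gt hx
      field_simp
      ring
    have htend : Tendsto (fun j : ℕ => (k : ℝ) * (k + 1 + j) / (k + 5 + 3 * j))
        atTop (nhds ((k : ℝ) / 3)) := by
      have := B.comp tendsto_natCast_atTop_atTop
      exact this
    refine ge_of_tendsto htend (Eventually.of_forall fun j => ?_)
    have hup := minPoints_upper hk (m := k + 1 + j) (by omega)
    set n : ℕ := 3 * (k + 1 + j) + 2 - 2 * k with hn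
    have hne : n ≠ 0 := by omega
    have h1 : hsub.lim ≤ u n / n := hsub.lim_le_div hbdd hne
    refine h1.trans ?_
    have hnn : ((n : ℕ) : ℝ) = (k : ℝ) + 5 + 3 * j := by
      have e : n = k + 5 + 3 * j := by omega
      rw [e]; push_cast; ring
    rw [hnn]
    have hpos : (0 : ℝ) < (k : ℝ) + 5 + 3 * j := by positivity
    rw [div_le_div_iff_of_pos_right hpos]
    simp only [hu]
    have : ((minPoints k n : ℕ) : ℝ) ≤ ((k * (k + 1 + j) : ℕ) : ℝ) := by exact_mod_cast hup
    calc ((minPoints k n : ℕ) : ℝ) ≤ ((k * (k + 1 + j) : ℕ) : ℝ) := this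
      _ = (k : ℝ) * (k + 1 + j) := by push_cast; ring
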